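/- Let (S, I) be a traveling wave profile with speed c > 0 such that 0 < S(ξ) ≤ S₀ and I(ξ) > 0 for all ξ ∈ ℝ, and set ν := (2d₂ + μ₂)/c. Then for all ξ ∈ ℝ one has I(ξ−1)/I(ξ) < e^{ν} and I(ξ+1)/I(ξ) < 4·(c/d₂)⁴·e^{3ν}; consequently the function ξ ↦ I'(ξ)/I(ξ) is bounded on ℝ. -/

import Mathlib

open Real Filter

/-- **Harnack-type estimates for the infected component** (Lemma 3.2 / Appendix A).
Let `(S, I)` be a traveling wave profile with speed `c > 0` satisfying
`0 < S(ξ) ≤ S₀` and `I(ξ) > 0` for all `ξ`, and set `ν = (2d₂ + μ₂)/c`.  Then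
`I(ξ−1)/I(ξ) < e^{ν}`, `I(ξ+1)/I(ξ) < 4(c/d₂)⁴e^{3ν}` for all `ξ`, and the function
`I'/I` is bounded on `ℝ`. -/
theorem harnack_estimates_I
    (d₁ d₂ Λ β μ₁ μ₂ : ℝ) (hd₁ : 0 < d₁) (hd₂ : 0 < d₂) (hΛ : 0 < Λ)
    (hβ : 0 < β) (hμ₁ : 0 < μ₁) (hμ₂ : 0 < μ₂)
    (f : ℝ → ℝ) (hf0 : f 0 = 0) (hfC1 : ContDiff ℝ 1 f)
    (hf' : ∀ I : ℝ, 0 ≤ I → 0 < deriv f I)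
    (hfratio : ∀ I J : ℝ, 0 < I → I ≤ J → f J / J ≤ f I / I)
    (c : ℝ) (hc : 0 < c)
    (S I : ℝ → ℝ) (hS : ContDiff ℝ 1 S) (hI : ContDiff ℝ 1 I)
    (hSeq : ∀ ξ : ℝ, c * deriv S ξ =
      d₁ * (S (ξ + 1) + S (ξ - 1) - 2 * S ξ) + Λ - μ₁ * S ξ - β * S ξ * f (I ξ))
    (hIeq : ∀ ξ : ℝ, c * deriv I ξ =
      d₂ * (I (ξ + 1) + I (ξ - 1) - 2 * I ξ) + β * S ξ * f (I ξ) - μ₂ * I ξ)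
    (hSbd : ∀ ξ : ℝ, 0 < S ξ ∧ S ξ ≤ Λ / μ₁) (hIpos : ∀ ξ : ℝ, 0 < I ξ) :
    (∀ ξ : ℝ, I (ξ - 1) / I ξ < Real.exp ((2 * d₂ + μ₂) / c)) ∧
    (∀ ξ : ℝ, I (ξ + 1) / I ξ <
      4 * (c / d₂) ^ 4 * Real.exp (3 * ((2 * d₂ + μ₂) / c))) ∧
    ∃ C : ℝ, ∀ ξ : ℝ, |deriv I ξ / I ξ| ≤ C := by
  set ν : ℝ := (2 * d₂ + μ₂) / c with hνdef
  have hν : 0 < ν := div_pos (by linarith) hc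
  have hcν : c * ν = 2 * d₂ + μ₂ := by
    rw [hνdef]; field_simp
  -- f is positive on positive reals
  have hfmono : StrictMonoOn f (Set.Ici 0) := by
    apply strictMonoOn_of_deriv_pos (convex_Ici 0) hfC1.continuous.continuousOn
    intro x hx
    rw [interior_Ici] at hx
    exact hf' x hx.le
  have hfpos : ∀ x : ℝ, 0 < x → 0 < f x := by
    intro x hx
    have := hfmono Set.self_mem_Ici (Set.mem_Ici.mpr hx.le) hx
    rwa [hf0] at this
  have hIdiff : Differentiable ℝ I := hI.differentiable one_ne_zero
  -- key differential inequality
  have hkey : ∀ s : ℝ, d₂ * I (s + 1) ≤ c * deriv I s + c * ν * I s := by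
    intro s
    have h1 := hIeq s
    have h2 : 0 < d₂ * I (s - 1) := mul_pos hd₂ (hIpos _)
    have h3 : 0 < β * S s * f (I s) :=
      mul_pos (mul_pos hβ (hSbd s).1) (hfpos _ (hIpos s))
    rw [hcν]
    linarith
  -- lower bound on I'/I
  have hlow : ∀ s : ℝ, -ν < deriv I s / I s := by
    intro s
    rw [lt_div_iff₀ (hIpos s)]
    have h2 : 0 < d₂ * I (s + 1) := mul_pos hd₂ (hIpos _)
    have h4 : c * (-ν * I s) < c * deriv I s := by
      have := hkey s; nlinarith
    nlinarith [(mul_lt_mul_iff_right₀ hc).mp h4]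
  -- log I + ν ξ is strictly monotone
  have hφd : ∀ t : ℝ, HasDerivAt (fun t => Real.log (I t) + ν * t)
      (deriv I t / I t + ν) t := by
    intro t
    have h1 : HasDerivAt (fun t => Real.log (I t)) (deriv I t / I t) t :=
      ((hIdiff t).hasDerivAt).log (ne_of_gt (hIpos t))
    have h2 : HasDerivAt (fun t : ℝ => ν * t) ν t := by
      simpa using (hasDerivAt_id t).const_mul ν
    exact h1.add h2
  have hφmono : StrictMono (fun t => Real.log (I t) + ν * t) :=
    strictMono_of_hasDerivAt_pos hφd (fun t => by linarith [hlow t])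
  -- exponential decay bound
  have hdecay : ∀ a b : ℝ, a ≤ b → I a ≤ Real.exp (ν * (b - a)) * I b := by
    intro a b hab
    rcases eq_or_lt_of_le hab with rfl | h
    · simp
    · have hmono : Real.log (I a) + ν * a ≤ Real.log (I b) + ν * b := (hφmono h).le
      have h2 : I a ≤ Real.exp (ν * (b - a) + Real.log (I b)) := by
        rw [← Real.exp_log (hIpos a)]
        apply Real.exp_le_exp.mpr
        nlinarith
      rwa [Real.exp_add, Real.exp_log (hIpos b)] at h2
  -- first claim
  have claim1 : ∀ ξ : ℝ, I (ξ - 1) / I ξ < Real.exp ν := by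
    intro ξ
    have h : Real.log (I (ξ - 1)) + ν * (ξ - 1) < Real.log (I ξ) + ν * ξ :=
      hφmono (show ξ - 1 < ξ by linarith)
    rw [div_lt_iff₀ (hIpos ξ)]
    have h2 : I (ξ - 1) < Real.exp (ν + Real.log (I ξ)) := by
      rw [← Real.exp_log (hIpos (ξ - 1))]
      apply Real.exp_lt_exp.mpr
      nlinarith
    rwa [Real.exp_add, Real.exp_log (hIpos ξ)] at h2
  -- half-step Harnack
  have halfstep : ∀ ξ : ℝ, I (ξ + 1) ≤ 2 * c / d₂ * Real.exp (ν / 2) * I (ξ + 1 / 2) := by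
    intro ξ
    set m : ℝ := d₂ / c * Real.exp (ν * ξ) * I (ξ + 1) with hm
    have hgd : ∀ s : ℝ, HasDerivAt (fun t => Real.exp (ν * t) * I t - m * t)
        (Real.exp (ν * s) * ν * I s + Real.exp (ν * s) * deriv I s - m) s := by
      intro s
      have h1 : HasDerivAt (fun t : ℝ => Real.exp (ν * t)) (Real.exp (ν * s) * ν) s := by
        simpa using ((hasDerivAt_id s).const_mul ν).exp
      have h2 := h1.mul (hIdiff s).hasDerivAt
      have h3 : HasDerivAt (fun t : ℝ => m * t) m s := by
        simpa using (hasDerivAt_id s).const_mul m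
      exact h2.sub h3
    have hmono : MonotoneOn (fun t => Real.exp (ν * t) * I t - m * t)
        (Set.Icc ξ (ξ + 1 / 2)) := by
      apply monotoneOn_of_deriv_nonneg (convex_Icc _ _)
      · exact Continuous.continuousOn (by
          exact ((Real.continuous_exp.comp (continuous_const.mul continuous_id)).mul
            hI.continuous).sub (continuous_const.mul continuous_id))
      · intro x _
        exact (hgd x).differentiableAt.differentiableWithinAt
      · intro x hx
        rw [interior_Icc] at hx
        rw [(hgd x).deriv]
        have hk := hkey x
        have hdec : I (ξ + 1) ≤ Real.exp (ν * (x - ξ)) * I (x + 1) := by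
          have := hdecay (ξ + 1) (x + 1) (by linarith [hx.1])
          rwa [show x + 1 - (ξ + 1) = x - ξ by ring] at this
        have e1 : (0:ℝ) < Real.exp (ν * x) := Real.exp_pos _
        have h5 : d₂ / c * I (x + 1) ≤ ν * I x + deriv I x := by
          rw [div_mul_eq_mul_div, div_le_iff₀ hc]
          nlinarith [hkey x]
        have h6 : Real.exp (ν * x) * (d₂ / c * I (x + 1)) ≤
            Real.exp (ν * x) * (ν * I x + deriv I x) :=
          mul_le_mul_of_nonneg_left h5 e1.le
        have h7 : Real.exp (ν * ξ) * I (ξ + 1) ≤ Real.exp (ν * x) * I (x + 1) := by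
          calc Real.exp (ν * ξ) * I (ξ + 1)
              ≤ Real.exp (ν * ξ) * (Real.exp (ν * (x - ξ)) * I (x + 1)) :=
                mul_le_mul_of_nonneg_left hdec (Real.exp_pos _).le
            _ = Real.exp (ν * x) * I (x + 1) := by
                rw [← mul_assoc, ← Real.exp_add]; ring_nf
        have h8 : d₂ / c * (Real.exp (ν * ξ) * I (ξ + 1)) ≤
            d₂ / c * (Real.exp (ν * x) * I (x + 1)) :=
          mul_le_mul_of_nonneg_left h7 (div_pos hd₂ hc).le
        have hmeq : m = d₂ / c * (Real.exp (ν * ξ) * I (ξ + 1)) := by rw [hm]; ring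
        nlinarith
    have happ := hmono (Set.left_mem_Icc.mpr (by linarith))
      (Set.right_mem_Icc.mpr (by linarith)) (by linarith)
    -- g(ξ+1/2) ≥ m/2
    have hg0 : 0 < Real.exp (ν * ξ) * I ξ := mul_pos (Real.exp_pos _) (hIpos ξ)
    have hkey2 : m * (1 / 2) ≤ Real.exp (ν * (ξ + 1 / 2)) * I (ξ + 1 / 2) := by
      simp only at happ
      nlinarith
    have hexp : Real.exp (ν * (ξ + 1 / 2)) = Real.exp (ν * ξ) * Real.exp (ν / 2) := by
      rw [← Real.exp_add]; ring_nf
    rw [hexp] at hkey2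
    rw [hm] at hkey2
    have e2 : (0:ℝ) < Real.exp (ν * ξ) := Real.exp_pos _
    have hfin : d₂ / c * I (ξ + 1) * (1 / 2) ≤ Real.exp (ν / 2) * I (ξ + 1 / 2) := by
      nlinarith
    have hmul := mul_le_mul_of_nonneg_left hfin (by positivity : (0:ℝ) ≤ 2 * c / d₂)
    have heq : 2 * c / d₂ * (d₂ / c * I (ξ + 1) * (1 / 2)) = I (ξ + 1) := by
      field_simp
    calc I (ξ + 1) = 2 * c / d₂ * (d₂ / c * I (ξ + 1) * (1 / 2)) := heq.symm
      _ ≤ 2 * c / d₂ * (Real.exp (ν / 2) * I (ξ + 1 / 2)) := hmul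
      _ = 2 * c / d₂ * Real.exp (ν / 2) * I (ξ + 1 / 2) := by ring
  -- full-step bound with constant B = (2c/d₂)² e^ν
  have claim2' : ∀ ξ : ℝ, I (ξ + 1) ≤ (2 * c / d₂) ^ 2 * Real.exp ν * I ξ := by
    intro ξ
    have a1 := halfstep ξ
    have a2 := halfstep (ξ - 1 / 2)
    rw [show ξ - 1 / 2 + 1 = ξ + 1 / 2 by ring, show ξ - 1 / 2 + 1 / 2 = ξ by ring] at a2
    calc I (ξ + 1) ≤ 2 * c / d₂ * Real.exp (ν / 2) * I (ξ + 1 / 2) := a1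
      _ ≤ 2 * c / d₂ * Real.exp (ν / 2) * (2 * c / d₂ * Real.exp (ν / 2) * I ξ) :=
          mul_le_mul_of_nonneg_left a2 (by positivity)
      _ = (2 * c / d₂) ^ 2 * Real.exp ν * I ξ := by
          rw [show ν = ν / 2 + ν / 2 by ring, Real.exp_add]; ring
  -- second claim
  have claim2 : ∀ ξ : ℝ, I (ξ + 1) / I ξ < 4 * (c / d₂) ^ 4 * Real.exp (3 * ν) := by
    intro ξ
    rw [div_lt_iff₀ (hIpos ξ)]
    have hB := claim2' ξ
    have hlt : (2 * c / d₂) ^ 2 * Real.exp ν < 4 * (c / d₂) ^ 4 * Real.exp (3 * ν) := by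
      have hx : 0 < c / d₂ := div_pos hc hd₂
      have h1 : d₂ / c < Real.exp ν := by
        have h1a : d₂ / c < ν := by
          rw [hνdef, div_lt_div_iff₀ hc hc]
          nlinarith
        linarith [Real.add_one_le_exp ν]
      have h2 : 1 < c / d₂ * Real.exp ν := by
        have h1' : d₂ < Real.exp ν * c := (div_lt_iff₀ hc).mp h1
        rw [show c / d₂ * Real.exp ν = Real.exp ν * c / d₂ by ring, lt_div_iff₀ hd₂]
        linarith
      have he : Real.exp (3 * ν) = Real.exp ν * (Real.exp ν * Real.exp ν) := by
        rw [← Real.exp_add, ← Real.exp_add]; ring_nf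
      rw [he]
      have f1 : 0 < c / d₂ * Real.exp ν - 1 := by linarith
      have f2 : 0 < c / d₂ * Real.exp ν + 1 := by positivity
      have whole : 0 < 4 * (c / d₂) ^ 2 * Real.exp ν *
          ((c / d₂ * Real.exp ν - 1) * (c / d₂ * Real.exp ν + 1)) :=
        mul_pos (by positivity) (mul_pos f1 f2)
      ring_nf at whole ⊢
      linarith [whole]
    calc I (ξ + 1) ≤ (2 * c / d₂) ^ 2 * Real.exp ν * I ξ := hB
      _ < 4 * (c / d₂) ^ 4 * Real.exp (3 * ν) * I ξ :=
          mul_lt_mul_of_pos_right hlt (hIpos ξ)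
  -- linear bound on f
  have hKpos : 0 < deriv f 0 := hf' 0 le_rfl
  have hfK : ∀ x : ℝ, 0 < x → f x ≤ deriv f 0 * x := by
    intro x hx
    have hda : HasDerivAt f (deriv f 0) 0 := (hfC1.differentiable one_ne_zero 0).hasDerivAt
    rw [hasDerivAt_iff_tendsto_slope] at hda
    have h2 : Tendsto (slope f 0) (nhdsWithin (0:ℝ) (Set.Ioi 0)) (nhds (deriv f 0)) :=
      hda.mono_left (nhdsWithin_mono 0 (fun t ht => ne_of_gt ht))
    have hslope : Tendsto (fun t => f t / t) (nhdsWithin (0:ℝ) (Set.Ioi 0)) (nhds (deriv f 0)) := by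
      apply h2.congr'
      filter_upwards [self_mem_nhdsWithin] with t ht
      simp [slope_def_field, hf0]
    have hbound : ∀ᶠ t in nhdsWithin (0:ℝ) (Set.Ioi 0), f x / x ≤ f t / t := by
      filter_upwards [Ioc_mem_nhdsGT_of_mem ⟨le_rfl, hx⟩] with t ht
      exact hfratio t x ht.1 ht.2
    have hle : f x / x ≤ deriv f 0 := ge_of_tendsto hslope hbound
    calc f x = f x / x * x := by field_simp
      _ ≤ deriv f 0 * x := mul_le_mul_of_nonneg_right hle hx.le
  -- upper bound on I'/I
  set M : ℝ := d₂ * ((2 * c / d₂) ^ 2 * Real.exp ν) + d₂ * Real.exp ν +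
    β * (Λ / μ₁) * deriv f 0 with hM
  have hup : ∀ ξ : ℝ, deriv I ξ / I ξ ≤ M / c := by
    intro ξ
    have h1 := hIeq ξ
    have h2 := claim2' ξ
    have h3 : I (ξ - 1) ≤ Real.exp ν * I ξ :=
      le_of_lt ((div_lt_iff₀ (hIpos ξ)).mp (claim1 ξ))
    have h4 : β * S ξ * f (I ξ) ≤ β * (Λ / μ₁) * (deriv f 0 * I ξ) := by
      apply mul_le_mul
      · exact mul_le_mul_of_nonneg_left (hSbd ξ).2 hβ.le
      · exact hfK _ (hIpos ξ)
      · exact (hfpos _ (hIpos ξ)).le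
      · positivity
    have h5 : c * deriv I ξ ≤ M * I ξ := by
      rw [hM]
      nlinarith [mul_le_mul_of_nonneg_left h2 hd₂.le, mul_le_mul_of_nonneg_left h3 hd₂.le,
        mul_pos hμ₂ (hIpos ξ), mul_pos hd₂ (hIpos ξ)]
    rw [div_le_div_iff₀ (hIpos ξ) hc]
    linarith
  refine ⟨claim1, claim2, max ν (M / c), fun ξ => ?_⟩
  rw [abs_le]
  constructor
  · have := hlow ξ
    have := le_max_left ν (M / c)
    linarith
  · exact le_trans (hup ξ) (le_max_right _ _)
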